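/- arXiv:2503.20671 — 2 statements merged into one kernel-verified Lean document; each statement's English description precedes it below -/
import Mathlib

section
/- In a category with finite limits and parametrized list objects, the forgetful-composed-with-pullback functor Σ_A ∘ Δ_f having a right adjoint is equivalent to f : A → B being exponentiable, and also equivalent to the pullback functor Δ_f : C/B → C/A having a right adjoint Π_f. -/
open CategoryTheory Limits

/-- A parametrized list object on `X`: an object `L` with "nil" and "cons" maps
satisfying the (parametrized) recursion universal property. -/
structure ParamListObject {C : Type*} [Category C] [HasFiniteLimits C] (X : C) where
  L : C
  nil : ⊤_ C ⟶ L
  cons : X ⨯ L ⟶ L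
  fold : ∀ {A B : C}, (A ⟶ B) → (X ⨯ B ⟶ B) → (A ⨯ L ⟶ B)
  fold_nil : ∀ {A B : C} (g : A ⟶ B) (h : X ⨯ B ⟶ B),
    prod.lift (𝟙 A) (terminal.from A ≫ nil) ≫ fold g h = g
  fold_cons : ∀ {A B : C} (g : A ⟶ B) (h : X ⨯ B ⟶ B),
    prod.map (𝟙 A) cons ≫ fold g h =
      prod.lift (prod.snd ≫ prod.fst) (prod.map (𝟙 A) prod.snd ≫ fold g h) ≫ h
  fold_unique : ∀ {A B : C} (g : A ⟶ B) (h : X ⨯ B ⟶ B) (f : A ⨯ L ⟶ B),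
    prod.lift (𝟙 A) (terminal.from A ≫ nil) ≫ f = g →
    prod.map (𝟙 A) cons ≫ f =
      prod.lift (prod.snd ≫ prod.fst) (prod.map (𝟙 A) prod.snd ≫ f) ≫ h →
    f = fold g h


section NiefieldAux

variable {C : Type*} [Category C] [HasFiniteLimits C]

noncomputable instance forgetComonadic (A : C) : ComonadicLeftAdjoint (Over.forget A) := by
  have h1 : Comonad.PreservesLimitOfIsCoreflexivePair (Over.forget A) :=
    ⟨fun _ _ _ _ _ => inferInstance⟩
  exact Comonad.comonadicOfHasPreservesCoreflexiveEqualizersOfReflectsIsomorphisms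
    (Over.forgetAdjStar A)

/-- `Δ_f ⋙ Σ_f` is the product functor with `f` on `C/B`. -/
noncomputable def pullbackCompMapIsoProd {A B : C} (f : A ⟶ B) :
    Over.pullback f ⋙ Over.map f ≅ prod.functor.obj (Over.mk f) :=
  NatIso.ofComponents
    (fun X => Over.isoMk (g := Over.mk f ⨯ X)
      ((pullbackSymmetry X.hom f) ≪≫ (Over.prodLeftIsoPullback (Over.mk f) X).symm)
      (by
        dsimp
        rw [← Over.w (prod.fst : Over.mk f ⨯ X ⟶ Over.mk f)]
        simp [pullbackSymmetry_hom_comp_fst_assoc]))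
    (fun {X Y} g => by
      apply Limits.prod.hom_ext
      · ext
        erw [Over.comp_left, Over.comp_left, Over.comp_left, Over.comp_left]
        simp
        erw [Category.assoc, ← Over.comp_left, prod.map_fst, Category.comp_id, Category.assoc, Over.prodLeftIsoPullback_inv_fst]
        simp
        exact pullback.lift_snd _ _ _
      · ext
        erw [Over.comp_left, Over.comp_left, Over.comp_left, Over.comp_left]
        simp
        erw [Category.assoc, ← Over.comp_left, prod.map_snd, Over.comp_left, Category.assoc, Over.prodLeftIsoPullback_inv_snd_assoc]
        simp
        exact pullback.lift_fst _ _ _)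

end NiefieldAux

section NiefieldAux2

variable {C : Type*} [Category C] [HasFiniteLimits C]

/-- `Σ_A ∘ Δ_f ≅ (f ⨯ −) ⋙ Σ_B`. -/
noncomputable def pullbackForgetIsoProdForget {A B : C} (f : A ⟶ B) :
    Over.pullback f ⋙ Over.forget A ≅ prod.functor.obj (Over.mk f) ⋙ Over.forget B :=
  Functor.isoWhiskerLeft (Over.pullback f) (Over.mapForget f).symm ≪≫
    (Functor.associator _ _ _).symm ≪≫
    Functor.isoWhiskerRight (pullbackCompMapIsoProd f) (Over.forget B)

theorem niefield_aux {A B : C} (f : A ⟶ B) :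
    ((Over.pullback f ⋙ Over.forget A).IsLeftAdjoint ↔
      ((prod.functor.obj (Over.mk f) : Over B ⥤ Over B).IsLeftAdjoint)) ∧
    ((Over.pullback f ⋙ Over.forget A).IsLeftAdjoint ↔
      (Over.pullback f : Over B ⥤ Over A).IsLeftAdjoint) := by
  have goal2 : (Over.pullback f ⋙ Over.forget A).IsLeftAdjoint ↔
      (Over.pullback f : Over B ⥤ Over A).IsLeftAdjoint := by
    constructor
    · intro h
      exact isLeftAdjoint_triangle_lift_comonadic (Over.forget A)
    · intro h
      exact ((Adjunction.ofIsLeftAdjoint (Over.pullback f)).comp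
        (Over.forgetAdjStar A)).isLeftAdjoint
  refine ⟨goal2.trans ?_, goal2⟩
  constructor
  · intro h
    exact (((Adjunction.ofIsLeftAdjoint (Over.pullback f)).comp
      (Over.mapPullbackAdj f)).ofNatIsoLeft (pullbackCompMapIsoProd f)).isLeftAdjoint
  · intro h
    rw [← goal2]
    have h2 : (prod.functor.obj (Over.mk f) ⋙ Over.forget B).IsLeftAdjoint :=
      ((Adjunction.ofIsLeftAdjoint _).comp (Over.forgetAdjStar B)).isLeftAdjoint
    exact ((Adjunction.ofIsLeftAdjoint _).ofNatIsoLeft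
      (pullbackForgetIsoProdForget f).symm).isLeftAdjoint

end NiefieldAux2

/-- Niefield's fact: in a category with finite limits (and parametrized list objects),
for `f : A ⟶ B`, the functor `Σ_A ∘ Δ_f` has a right adjoint iff `f` is exponentiable
(i.e. `− × f` on `C/B` has a right adjoint) iff `Δ_f` has a right adjoint `Π_f`. -/
theorem niefield_fact {C : Type*} [Category C] [HasFiniteLimits C]
    (listObj : ∀ X : C, ParamListObject X) {A B : C} (f : A ⟶ B) :
    ((Over.pullback f ⋙ Over.forget A).IsLeftAdjoint ↔
      ((prod.functor.obj (Over.mk f) : Over B ⥤ Over B).IsLeftAdjoint)) ∧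
    ((Over.pullback f ⋙ Over.forget A).IsLeftAdjoint ↔
      (Over.pullback f : Over B ⥤ Over A).IsLeftAdjoint) := niefield_aux f
end

section
/- In an extensive category with finite limits and parametrized list objects, for every object X the square with top row r₁ˣ : X × L(X) → L(X), left map len ∘ π₂ : X × L(X) → N, right map len : L(X) → N, and bottom map s : N → N is a pullback; moreover the coproduct 1 → N ← N given by (0, s) is universal (stable under pullback). -/
open CategoryTheory Limits

variable {C : Type*} [Category C] [HasFiniteLimits C]

/-- The natural numbers object `N = L(1)`. -/
noncomputable def NObj (listObj : ∀ X : C, ParamListObject X) : C :=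
  (listObj (⊤_ C)).L

/-- Zero `0 : 1 ⟶ N` is the empty list. -/
noncomputable def NZero (listObj : ∀ X : C, ParamListObject X) : ⊤_ C ⟶ NObj listObj :=
  (listObj (⊤_ C)).nil

/-- Successor `s : N ⟶ N` is consing the unique element of `1`. -/
noncomputable def NSucc (listObj : ∀ X : C, ParamListObject X) :
    NObj listObj ⟶ NObj listObj :=
  prod.lift (terminal.from _) (𝟙 _) ≫ (listObj (⊤_ C)).cons

/-- The length map `len : L(X) ⟶ N`, defined inductively by
`len ∅ = 0` and `len (x :: ℓ) = s (len ℓ)`. -/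
noncomputable def lenMap (listObj : ∀ X : C, ParamListObject X) (X : C) :
    (listObj X).L ⟶ NObj listObj :=
  prod.lift (terminal.from _) (𝟙 _) ≫
    (listObj X).fold (NZero listObj) (prod.snd ≫ NSucc listObj)

section Aux

variable (listObj : ∀ X : C, ParamListObject X)

private lemma fold_nil_cons (X : C) :
    (listObj X).fold (listObj X).nil (listObj X).cons = prod.snd := by
  symm
  apply (listObj X).fold_unique
  · simp [terminal.hom_ext (terminal.from (⊤_ C)) (𝟙 (⊤_ C)), prod.lift_snd]
  · rw [prod.map_snd]
    congr 1
    apply Limits.prod.hom_ext <;> simp [prod.lift_fst, prod.lift_snd]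

variable [FinitaryExtensive C]

/-- The case-analysis map `L ⟶ 1 ⊔ (X ⨯ L)`, inverse to `[nil, cons]`. -/
noncomputable def caseMap (X : C) : (listObj X).L ⟶ (⊤_ C) ⨿ (X ⨯ (listObj X).L) :=
  prod.lift (terminal.from _) (𝟙 _) ≫
    (listObj X).fold coprod.inl
      (prod.map (𝟙 X) (coprod.desc (listObj X).nil (listObj X).cons) ≫ coprod.inr)

private lemma fold_case_desc (X : C) :
    (listObj X).fold coprod.inl
        (prod.map (𝟙 X) (coprod.desc (listObj X).nil (listObj X).cons) ≫ coprod.inr) ≫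
      coprod.desc (listObj X).nil (listObj X).cons = prod.snd := by
  rw [← fold_nil_cons listObj X]
  apply (listObj X).fold_unique
  · rw [← Category.assoc, (listObj X).fold_nil]
    simp [coprod.inl_desc]
  · rw [← Category.assoc, (listObj X).fold_cons]
    simp only [Category.assoc, coprod.inr_desc, prod.lift_map_assoc, Category.comp_id]

private lemma caseMap_desc (X : C) :
    caseMap listObj X ≫ coprod.desc (listObj X).nil (listObj X).cons = 𝟙 _ := by
  rw [caseMap, Category.assoc, fold_case_desc]
  simp [prod.lift_snd]

private lemma nil_comp_lift (X : C) :
    (listObj X).nil ≫ prod.lift (terminal.from (listObj X).L) (𝟙 (listObj X).L) =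
      prod.lift (𝟙 (⊤_ C)) (terminal.from (⊤_ C) ≫ (listObj X).nil) := by
  apply Limits.prod.hom_ext
  · apply terminal.hom_ext
  · simp [Subsingleton.elim (terminal.from (⊤_ C)) (𝟙 (⊤_ C))]

private lemma cons_comp_lift (X : C) :
    (listObj X).cons ≫ prod.lift (terminal.from (listObj X).L) (𝟙 (listObj X).L) =
      prod.lift (terminal.from (X ⨯ (listObj X).L)) (𝟙 _) ≫
        prod.map (𝟙 (⊤_ C)) (listObj X).cons := by
  apply Limits.prod.hom_ext
  · apply terminal.hom_ext
  · simp

private lemma nil_caseMap (X : C) : (listObj X).nil ≫ caseMap listObj X = coprod.inl := by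
  rw [caseMap, ← Category.assoc, nil_comp_lift, (listObj X).fold_nil]

private lemma cons_caseMap (X : C) :
    (listObj X).cons ≫ caseMap listObj X = coprod.inr := by
  have fcm := fold_case_desc listObj X
  rw [caseMap, ← Category.assoc, cons_comp_lift, Category.assoc, (listObj X).fold_cons]
  simp only [prod.comp_lift_assoc, prod.lift_snd_assoc, Category.id_comp, Category.comp_id,
    prod.lift_map_assoc, Category.assoc, prod.lift_snd, prod.lift_fst,
    reassoc_of% fcm]
  rw [fcm]
  simp [prod.lift_snd]

/-- The cofan `(nil, cons)` on `L(X)` is a coproduct. -/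
noncomputable def listCofanIsColimit (X : C) :
    IsColimit (BinaryCofan.mk (listObj X).nil (listObj X).cons) :=
  BinaryCofan.isColimitMk
    (fun s => caseMap listObj X ≫ coprod.desc s.inl s.inr)
    (fun s => by rw [← Category.assoc, nil_caseMap]; exact coprod.inl_desc _ _)
    (fun s => by rw [← Category.assoc, cons_caseMap]; exact coprod.inr_desc _ _)
    (fun s t h1 h2 => by
      have hm : coprod.desc (listObj X).nil (listObj X).cons ≫ t = coprod.desc s.inl s.inr := by
        apply coprod.hom_ext <;> simp [h1, h2]
      conv_lhs => rw [← Category.id_comp t, ← caseMap_desc listObj X, Category.assoc, hm]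
      rfl)

private lemma cons_eq_snd_succ :
    (listObj (⊤_ C)).cons = prod.snd ≫ NSucc listObj := by
  rw [NSucc]
  erw [← Category.assoc]
  have e : 𝟙 ((⊤_ C) ⨯ NObj listObj) =
      prod.snd ≫ prod.lift (terminal.from (NObj listObj)) (𝟙 (NObj listObj)) := by
    apply Limits.prod.hom_ext
    · apply terminal.hom_ext
    · simp [prod.lift_snd]
  erw [← e, Category.id_comp]

/-- The cofan `(0, s)` on `N` is a coproduct. -/
noncomputable def succCofanIsColimit :
    IsColimit (BinaryCofan.mk (NZero listObj) (NSucc listObj)) := by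
  have h := listCofanIsColimit listObj (⊤_ C)
  refine BinaryCofan.isColimitMk
    (fun s => h.desc (BinaryCofan.mk s.inl (prod.snd ≫ s.inr))) ?_ ?_ ?_
  · intro s
    exact h.fac (BinaryCofan.mk s.inl (prod.snd ≫ s.inr)) ⟨WalkingPair.left⟩
  · intro s
    have hf := h.fac (BinaryCofan.mk s.inl (prod.snd ≫ s.inr)) ⟨WalkingPair.right⟩
    simp only [BinaryCofan.mk_pt, pair_obj_right, BinaryCofan.ι_app_right, BinaryCofan.mk_inr] at hf
    erw [NSucc, Category.assoc, hf, ← Category.assoc, prod.lift_snd, Category.id_comp]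
  · intro s t h1 h2
    refine h.uniq (BinaryCofan.mk s.inl (prod.snd ≫ s.inr)) t ?_
    have hc : (listObj (⊤_ C)).cons ≫ t = prod.snd ≫ s.inr := by
      erw [cons_eq_snd_succ listObj, Category.assoc, h2]
      exact rfl
    rintro ⟨⟨⟩⟩
    · exact h1
    · exact hc

private lemma nil_len (X : C) :
    (listObj X).nil ≫ lenMap listObj X = NZero listObj := by
  rw [lenMap, ← Category.assoc, nil_comp_lift, (listObj X).fold_nil]

private lemma cons_len (X : C) :
    (listObj X).cons ≫ lenMap listObj X = prod.snd ≫ lenMap listObj X ≫ NSucc listObj := by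
  rw [lenMap, ← Category.assoc, cons_comp_lift, Category.assoc, (listObj X).fold_cons]
  simp only [prod.comp_lift_assoc, prod.lift_snd_assoc, prod.lift_snd, Category.id_comp,
    Category.comp_id, prod.lift_map_assoc, Category.assoc]
  rw [terminal.comp_from]

end Aux

theorem extensive_hyps (listObj : ∀ X : C, ParamListObject X) [FinitaryExtensive C] :
    (∀ X : C,
      IsPullback (listObj X).cons (prod.snd ≫ lenMap listObj X) (lenMap listObj X)
        (NSucc listObj)) ∧
    (∀ (Z : C) (h : Z ⟶ NObj listObj),
      Nonempty (IsColimit (BinaryCofan.mk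
        (pullback.snd (NZero listObj) h) (pullback.snd (NSucc listObj) h)))) := by
  have hvk := FinitaryExtensive.vanKampen _ (succCofanIsColimit listObj)
  constructor
  · intro X
    have hcomm : mapPair (𝟙 (⊤_ C)) (prod.snd ≫ lenMap listObj X) ≫
        (BinaryCofan.mk (NZero listObj) (NSucc listObj)).ι =
        (BinaryCofan.mk (listObj X).nil (listObj X).cons).ι ≫
          (Functor.const _).map (lenMap listObj X) := by
      ext ⟨⟨⟩⟩
      · exact (Category.id_comp _).trans (nil_len listObj X).symm
      · exact (Category.assoc _ _ _).trans (cons_len listObj X).symm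
    have := (hvk (BinaryCofan.mk (listObj X).nil (listObj X).cons)
        (mapPair (𝟙 (⊤_ C)) (prod.snd ≫ lenMap listObj X)) (lenMap listObj X) hcomm
        (NatTrans.equifibered_of_discrete _)).mp
        ⟨listCofanIsColimit listObj X⟩ ⟨WalkingPair.right⟩
    exact this
  · intro Z h
    refine hvk.isUniversal
      (BinaryCofan.mk (pullback.snd (NZero listObj) h) (pullback.snd (NSucc listObj) h))
      (mapPair (pullback.fst (NZero listObj) h) (pullback.fst (NSucc listObj) h)) h ?_
      (NatTrans.equifibered_of_discrete _) ?_
    · ext ⟨⟨⟩⟩ <;> exact pullback.condition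
    · rintro ⟨⟨⟩⟩ <;> exact (IsPullback.of_hasPullback _ h).flip
end
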